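/- Let B = F_2[x,y]/(y² + y + x³ + x + 1). For every integer n ≥ 1, writing X = x^{2^n} and Y = y^{2^n} in B, one has (X² + x²)(X⁴ + x + 1) = (Y² + y + xX² + x)(Y² + y + xX² + x + 1) in B. (This is the identity, after clearing denominators, proving case (i) of the Lara Rodríguez–Thakur conjecture: the conjectured formula α_{n,1} = (X²+x²)/(Y²+y+xX²+x) for the ratio ζ_A(q^n−1, q^{n+1}−q^n)/ζ_A(q^{n+1}−1) agrees with the shtuka-theoretic formula α_{n,1} = (Y²+y+xX²+x+1)/(X⁴+x+1).) -/

import Mathlib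

/-!
`B = F₂[x,y]/(y² + y + x³ + x + 1)`, realised as the quotient of the bivariate
polynomial ring `Polynomial (Polynomial (ZMod 2))` (inner variable `x`, outer
variable `y`) by the ideal generated by the defining relation.
-/

open Polynomial

/-- The coordinate ring `B = F₂[x,y]/(y² + y + x³ + x + 1)`. -/
abbrev Bone : Type :=
  Polynomial (Polynomial (ZMod 2)) ⧸
    Ideal.span {(Polynomial.X ^ 2 + Polynomial.X +
      Polynomial.C (Polynomial.X ^ 3 + Polynomial.X + 1) :
        Polynomial (Polynomial (ZMod 2)))}

/-- The image `x` of the inner variable in `B`. -/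
noncomputable def xB : Bone :=
  Ideal.Quotient.mk _ (Polynomial.C Polynomial.X)

/-- The image `y` of the outer variable in `B`. -/
noncomputable def yB : Bone :=
  Ideal.Quotient.mk _ Polynomial.X

lemma fgen_not_unit :
    ¬ IsUnit ((Polynomial.X ^ 2 + Polynomial.X +
      Polynomial.C (Polynomial.X ^ 3 + Polynomial.X + 1) :
        Polynomial (Polynomial (ZMod 2)))) := by
  intro h
  have hdeg := Polynomial.natDegree_eq_zero_of_isUnit h
  have : (Polynomial.X ^ 2 + Polynomial.X +
      Polynomial.C (Polynomial.X ^ 3 + Polynomial.X + 1) :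
        Polynomial (Polynomial (ZMod 2))).natDegree = 2 := by
    compute_degree!
  omega

instance charP_Bone : CharP Bone 2 := by
  refine CharP.quotient' 2 _ (fun x hx => ?_)
  rcases Nat.even_or_odd x with he | ho
  · obtain ⟨k, rfl⟩ := he
    have : ((k + k : ℕ) : Polynomial (Polynomial (ZMod 2))) = 0 := by
      push_cast
      have h2 : ((2 : ℕ) : Polynomial (Polynomial (ZMod 2))) = 0 :=
        CharP.cast_eq_zero _ 2
      push_cast at h2
      linear_combination k * h2
    exact this
  · exfalso
    obtain ⟨k, rfl⟩ := ho
    have h1 : ((2 * k + 1 : ℕ) : Polynomial (Polynomial (ZMod 2))) = 1 := by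
      push_cast
      have h2 : ((2 : ℕ) : Polynomial (Polynomial (ZMod 2))) = 0 :=
        CharP.cast_eq_zero _ 2
      push_cast at h2
      linear_combination k * h2
    rw [h1] at hx
    rw [Ideal.mem_span_singleton] at hx
    exact fgen_not_unit (isUnit_of_dvd_one hx)

lemma rel_Bone : yB ^ 2 + yB + (xB ^ 3 + xB + 1) = 0 := by
  have h : (Ideal.Quotient.mk
      (Ideal.span {(Polynomial.X ^ 2 + Polynomial.X +
        Polynomial.C (Polynomial.X ^ 3 + Polynomial.X + 1) :
          Polynomial (Polynomial (ZMod 2)))}))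
      (Polynomial.X ^ 2 + Polynomial.X +
        Polynomial.C (Polynomial.X ^ 3 + Polynomial.X + 1)) = 0 :=
    Ideal.Quotient.eq_zero_iff_mem.2 (Ideal.subset_span rfl)
  simpa [yB, xB, map_add, map_pow, map_one] using h

/-- for every `n ≥ 1`, with `X = x^{2^n}` and `Y = y^{2^n}` in `B`,
`(X² + x²)(X⁴ + x + 1) = (Y² + y + xX² + x)(Y² + y + xX² + x + 1)`. -/
theorem statement16 (n : ℕ) (hn : 1 ≤ n) :
    ∀ X Y : Bone, X = xB ^ 2 ^ n → Y = yB ^ 2 ^ n →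
      (X ^ 2 + xB ^ 2) * (X ^ 4 + xB + 1) =
        (Y ^ 2 + yB + xB * X ^ 2 + xB) * (Y ^ 2 + yB + xB * X ^ 2 + xB + 1) := by
  intro X Y hX hY
  subst hX hY
  haveI : Fact (Nat.Prime 2) := ⟨by norm_num⟩
  have h2z : (2 : Bone) = 0 := by
    have := CharP.cast_eq_zero Bone 2
    push_cast at this
    exact this
  have h2 : yB ^ 2 + yB = xB ^ 3 + xB + 1 := by
    linear_combination rel_Bone - (xB ^ 3 + xB + 1) * h2z
  have hfr : (yB ^ 2 + yB) ^ 2 ^ (n + 1) = (xB ^ 3 + xB + 1) ^ 2 ^ (n + 1) := by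
    rw [h2]
  have hy := add_pow_char_pow (R := Bone) (p := 2) (x := yB ^ 2) (y := yB) (n := n + 1)
  have hx1 := add_pow_char_pow (R := Bone) (p := 2) (x := xB ^ 3 + xB) (y := 1) (n := n + 1)
  have hx2 := add_pow_char_pow (R := Bone) (p := 2) (x := xB ^ 3) (y := xB) (n := n + 1)
  rw [hy, hx1, hx2, (one_pow (M := Bone) (2 ^ (n + 1)) : (1 : Bone) ^ _ = 1), ← pow_mul, ← pow_mul] at hfr
  have e1 : 2 * 2 ^ (n + 1) = 2 ^ n * 4 := by rw [pow_succ]; ring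
  have e3 : 3 * 2 ^ (n + 1) = 2 ^ n * 6 := by rw [pow_succ]; ring
  have e2 : 2 ^ (n + 1) = 2 ^ n * 2 := pow_succ 2 n
  rw [e1, e3, e2, pow_mul, pow_mul, pow_mul] at hfr
  set s := yB ^ 2 ^ n with hs
  set t := xB ^ 2 ^ n with ht
  -- hfr : s ^ 4 + s ^ 2 = t ^ 6 + t ^ 2 + 1
  linear_combination (-1 : Bone) * hfr - h2 +
    (-xB - 1 - (s ^ 2 * yB + s ^ 2 * xB * t ^ 2 + s ^ 2 * xB +
      xB * yB * t ^ 2 + xB * yB + xB ^ 2 * t ^ 2)) * h2z
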